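/- In ℝ^d (d ≥ 2), let B be the open unit ball centered at the origin and define the measure μ(E) = ∫_{E∩B} 1/|x₁| dx for Borel sets E. Then μ vanishes on sets of capacity zero but μ is not a Radon measure (it is infinite on some compact sets); moreover, every u ∈ H¹(ℝ^d) with ∫ u² dμ < ∞ must vanish quasi-everywhere on the set {x ∈ B : x₁ = 0}, which has positive capacity. -/

import Mathlib

open MeasureTheory
open scoped ENNReal

/-- The `H¹`-capacity of a set `S ⊆ ℝ^d`. -/
noncomputable def sobolevCapacity (d : ℕ) (S : Set (EuclideanSpace ℝ (Fin d))) : ℝ≥0∞ :=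
  ⨅ (u : EuclideanSpace ℝ (Fin d) → ℝ) (_ : ContDiff ℝ 1 u ∧
      ∃ V, IsOpen V ∧ S ⊆ V ∧ ∀ x ∈ V, 1 ≤ u x),
    ∫⁻ x, ENNReal.ofReal (‖gradient u x‖ ^ 2 + (u x) ^ 2)


open Set

lemma lintegral_Ioo_inv_top {s : ℝ} (hs : 0 < s) :
    ∫⁻ t in Ioo (-s) s, ENNReal.ofReal |t|⁻¹ = ⊤ := by
  have hsub : Ioo (0:ℝ) s ⊆ Ioo (-s) s := fun t ht => ⟨lt_trans (by linarith) ht.1, ht.2⟩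
  refine top_unique (le_trans ?_ (lintegral_mono' (Measure.restrict_mono hsub le_rfl) le_rfl))
  -- show ∫⁻ t in Ioo 0 s, ofReal |t|⁻¹ = ⊤
  have key : ∫⁻ t in Ioo (0:ℝ) s, ENNReal.ofReal |t|⁻¹ = ⊤ := by
    by_contra h
    have hne : ∫⁻ t in Ioo (0:ℝ) s, ENNReal.ofReal |t|⁻¹ < ⊤ := lt_top_iff_ne_top.2 h
    have heq : ∀ t ∈ Ioo (0:ℝ) s, |t|⁻¹ = t ^ (-1 : ℝ) := by
      intro t ht
      rw [abs_of_pos ht.1, Real.rpow_neg_one]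
    have hint : IntegrableOn (fun t : ℝ => |t|⁻¹) (Ioo 0 s) := by
      constructor
      · exact ((measurable_abs.inv).aestronglyMeasurable)
      · rw [hasFiniteIntegral_iff_ofReal]
        · convert hne using 1
        · filter_upwards with t using by positivity
    have hint' : IntegrableOn (fun t : ℝ => t ^ (-1 : ℝ)) (Ioo 0 s) :=
      hint.congr_fun heq measurableSet_Ioo
    rw [intervalIntegral.integrableOn_Ioo_rpow_iff hs] at hint'
    linarith
  rw [key]


noncomputable def Phi (n : ℕ) : EuclideanSpace ℝ (Fin (n+1)) ≃ᵐ ℝ × (Fin n → ℝ) :=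
  (MeasurableEquiv.toLp 2 (Fin (n+1) → ℝ)).symm.trans
    (MeasurableEquiv.piFinSuccAbove (fun _ => ℝ) 0)

lemma Phi_mp (n : ℕ) : MeasurePreserving (Phi n) volume
    ((volume : Measure ℝ).prod (volume : Measure (Fin n → ℝ))) := by
  have h1 := EuclideanSpace.volume_preserving_symm_measurableEquiv_toLp (Fin (n+1))
  have h2 := measurePreserving_piFinSuccAbove (fun _ : Fin (n+1) => (volume : Measure ℝ)) 0
  exact h2.comp h1

lemma Phi_apply (n : ℕ) (x : EuclideanSpace ℝ (Fin (n+1))) :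
    Phi n x = (x 0, fun j => x ((0 : Fin (n+1)).succAbove j)) := rfl

lemma Phi_symm_apply (n : ℕ) (t : ℝ) (y : Fin n → ℝ) :
    (Phi n).symm (t, y) = (Fin.cons t y : ∀ _ : Fin (n+1), ℝ) := by
  have : (Phi n).symm (t, y) = ((0:Fin (n+1)).insertNth t y : ∀ _ : Fin (n+1), ℝ) := rfl
  rw [this, Fin.insertNth_zero]
  rfl


lemma lintegral_ball_inv_top (n : ℕ) (c : EuclideanSpace ℝ (Fin (n+1))) (hc : c 0 = 0)
    {r : ℝ} (hr : 0 < r) :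
    ∫⁻ x in Metric.ball c r, ENNReal.ofReal |x 0|⁻¹ ∂volume = ⊤ := by
  set s := r / (2 * (n+1)) with hs_def
  have hs0 : 0 < s := by positivity
  set A : Set ℝ := Ioo (-s) s with hA
  set B : Set (Fin n → ℝ) := univ.pi fun j => Ioo (c j.succ - s) (c j.succ + s) with hB
  set W : Set (EuclideanSpace ℝ (Fin (n+1))) := Phi n ⁻¹' (A ×ˢ B) with hW
  have hWsub : W ⊆ Metric.ball c r := by
    intro x hx
    have h1 : x 0 ∈ A := hx.1
    have h2 : ∀ j : Fin n, x j.succ ∈ Ioo (c j.succ - s) (c j.succ + s) := by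
      intro j
      have := hx.2 j (mem_univ j)
      simpa [Phi_apply] using this
    have hdist : ∀ i : Fin (n+1), dist (x i) (c i) ≤ s := by
      intro i
      induction i using Fin.cases with
      | zero =>
          rw [Real.dist_eq, hc, sub_zero]
          exact le_of_lt (abs_lt.2 ⟨h1.1, h1.2⟩)
      | succ j =>
          rw [Real.dist_eq]
          have := h2 j
          rw [abs_le]
          constructor <;> [linarith [this.1]; linarith [this.2]]
    have : dist x c ≤ Real.sqrt ((n+1) * s^2) := by
      rw [EuclideanSpace.dist_eq]
      apply Real.sqrt_le_sqrt
      calc ∑ i, dist (x i) (c i) ^ 2 ≤ ∑ _i : Fin (n+1), s^2 := by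
            apply Finset.sum_le_sum
            intro i _
            exact pow_le_pow_left₀ dist_nonneg (hdist i) 2
        _ = (n+1) * s^2 := by simp [Finset.sum_const]
    have h3 : Real.sqrt ((n+1) * s^2) ≤ (n+1) * s :=
      le_trans (Real.sqrt_le_sqrt (by nlinarith [Nat.cast_nonneg (α := ℝ) n]))
        (le_of_eq (Real.sqrt_sq (by positivity)))
    have h4 : ((n:ℝ)+1) * s = r / 2 := by
      rw [hs_def]; field_simp; try ring
    calc dist x c ≤ (n+1) * s := le_trans this h3
      _ = r / 2 := h4
      _ < r := by linarith
  have hABm : MeasurableSet (A ×ˢ B) :=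
    measurableSet_Ioo.prod (MeasurableSet.univ_pi fun j => measurableSet_Ioo)
  have hg : Measurable (fun p : ℝ × (Fin n → ℝ) => ENNReal.ofReal |p.1|⁻¹) :=
    (measurable_fst.abs.inv).ennreal_ofReal
  refine top_unique (le_trans ?_ (lintegral_mono' (Measure.restrict_mono hWsub le_rfl) le_rfl))
  have key : ∫⁻ x in W, ENNReal.ofReal |x 0|⁻¹ ∂volume
      = ∫⁻ p in A ×ˢ B, ENNReal.ofReal |p.1|⁻¹ ∂((volume : Measure ℝ).prod volume) :=
    (Phi_mp n).setLIntegral_comp_preimage_emb (Phi n).measurableEmbedding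
      (fun p : ℝ × (Fin n → ℝ) => ENNReal.ofReal |p.1|⁻¹) (A ×ˢ B)
  rw [key, ← Measure.prod_restrict,
    ← lintegral_map (f := fun t : ℝ => ENNReal.ofReal |t|⁻¹) (measurable_abs.inv.ennreal_ofReal) measurable_fst,
    Measure.map_fst_prod, lintegral_smul_measure]
  have hBvol : (volume.restrict B) univ = ∏ _j : Fin n, ENNReal.ofReal (2*s) := by
    rw [Measure.restrict_apply_univ, hB, volume_pi_pi]
    congr 1
    ext j
    rw [Real.volume_Ioo]
    congr 1
    ring
  rw [hBvol, lintegral_Ioo_inv_top hs0, smul_eq_mul, ENNReal.mul_top (by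
    simp only [Finset.prod_const]
    positivity)]

lemma vol_le_cap (d : ℕ) (S : Set (EuclideanSpace ℝ (Fin d))) :
    volume S ≤ sobolevCapacity d S := by
  refine le_iInf fun u => le_iInf fun hu => ?_
  obtain ⟨hC, V, hVo, hSV, hV1⟩ := hu
  calc volume S ≤ volume V := measure_mono hSV
    _ = ∫⁻ _x in V, 1 ∂volume := (setLIntegral_one V).symm
    _ ≤ ∫⁻ x in V, ENNReal.ofReal (‖gradient u x‖ ^ 2 + (u x) ^ 2) ∂volume := by
        refine setLIntegral_mono' hVo.measurableSet fun x hx => ?_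
        have h1 : (1:ℝ) ≤ ‖gradient u x‖ ^ 2 + (u x) ^ 2 := by
          have := hV1 x hx
          nlinarith [sq_nonneg (‖gradient u x‖)]
        calc (1:ℝ≥0∞) = ENNReal.ofReal 1 := by simp
          _ ≤ _ := ENNReal.ofReal_le_ofReal h1
    _ ≤ _ := setLIntegral_le_lintegral _ _

lemma cap_empty (d : ℕ) : sobolevCapacity d (∅ : Set (EuclideanSpace ℝ (Fin d))) = 0 := by
  refine le_antisymm ?_ (zero_le)
  refine iInf_le_of_le (fun _ => 0) (iInf_le_of_le
    ⟨contDiff_const, ∅, isOpen_empty, Set.Subset.rfl, fun x hx => absurd hx (Set.notMem_empty x)⟩ ?_)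
  simp [gradient_const]

lemma mu_ball_top (n : ℕ) (i0 : Fin (n+1)) (hi0 : i0 = 0)
    (c : EuclideanSpace ℝ (Fin (n+1))) (hc : c i0 = 0) (hlt : ‖c‖ < 1) {r : ℝ} (hr : 0 < r) :
    ((volume.restrict (Metric.ball (0 : EuclideanSpace ℝ (Fin (n+1))) 1)).withDensity
      (fun x => ENNReal.ofReal |x i0|⁻¹)) (Metric.ball c r) = ⊤ := by
  subst hi0
  set r' := min r (1 - ‖c‖) with hr'
  have hr'0 : 0 < r' := lt_min hr (by linarith)
  have hsub : Metric.ball c r' ⊆ Metric.ball (0 : EuclideanSpace ℝ (Fin (n+1))) 1 := by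
    intro x hx
    rw [mem_ball_zero_iff]
    calc ‖x‖ ≤ ‖x - c‖ + ‖c‖ := by simpa using norm_add_le (x - c) c
      _ < r' + ‖c‖ := by
          have := Metric.mem_ball.1 hx
          rw [dist_eq_norm] at this
          linarith
      _ ≤ 1 := by
          have : r' ≤ 1 - ‖c‖ := min_le_right _ _
          linarith
  refine top_unique ?_
  calc (⊤ : ℝ≥0∞) = ∫⁻ x in Metric.ball c r', ENNReal.ofReal |x 0|⁻¹ ∂volume :=
        (lintegral_ball_inv_top n c hc hr'0).symm
    _ = ((volume.restrict (Metric.ball (0 : EuclideanSpace ℝ (Fin (n+1))) 1)).withDensity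
          (fun x => ENNReal.ofReal |x 0|⁻¹)) (Metric.ball c r') := by
        rw [withDensity_apply _ Metric.isOpen_ball.measurableSet,
          Measure.restrict_restrict Metric.isOpen_ball.measurableSet,
          Set.inter_eq_left.2 hsub]
    _ ≤ _ := measure_mono (Metric.ball_subset_ball (min_le_left _ _))

lemma mu_zero_of_vol_zero (d : ℕ) (i0 : Fin d) (S : Set (EuclideanSpace ℝ (Fin d)))
    (h : volume S = 0) :
    ((volume.restrict (Metric.ball (0 : EuclideanSpace ℝ (Fin d)) 1)).withDensity
      (fun x => ENNReal.ofReal |x i0|⁻¹)) S = 0 := by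
  have h1 : ((volume.restrict (Metric.ball (0 : EuclideanSpace ℝ (Fin d)) 1)).withDensity
      (fun x => ENNReal.ofReal |x i0|⁻¹)) (toMeasurable volume S) = 0 := by
    rw [withDensity_apply _ (measurableSet_toMeasurable _ _)]
    refine setLIntegral_measure_zero _ _ ?_
    rw [Measure.restrict_apply (measurableSet_toMeasurable _ _)]
    refine measure_mono_null Set.inter_subset_left ?_
    rw [measure_toMeasurable]
    exact h
  exact le_antisymm (le_trans (measure_mono (subset_toMeasurable _ _)) h1.le) (zero_le)

lemma slice_empty (n : ℕ) (i0 : Fin (n+1)) (hi0 : i0 = 0)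
    (u : EuclideanSpace ℝ (Fin (n+1)) → ℝ) (hdiff : Differentiable ℝ u)
    (hfin : (∫⁻ x, ENNReal.ofReal ((u x) ^ 2)
        ∂((volume.restrict (Metric.ball (0 : EuclideanSpace ℝ (Fin (n+1))) 1)).withDensity
          (fun x => ENNReal.ofReal |x i0|⁻¹))) < ⊤) :
    {x | x ∈ Metric.ball (0 : EuclideanSpace ℝ (Fin (n+1))) 1 ∧ x i0 = 0 ∧ u x ≠ 0} = ∅ := by
  set μ := ((volume.restrict (Metric.ball (0 : EuclideanSpace ℝ (Fin (n+1))) 1)).withDensity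
      (fun x => ENNReal.ofReal |x i0|⁻¹)) with hμ
  by_contra hne
  obtain ⟨x₀, hx₀b, hx₀0, hx₀u⟩ := Set.nonempty_iff_ne_empty.2 hne
  set c := |u x₀| with hc
  have hc0 : 0 < c := abs_pos.2 hx₀u
  have hcont : ContinuousAt (fun x => |u x|) x₀ := (hdiff.continuous.abs).continuousAt
  have hev : ∀ᶠ x in nhds x₀, c / 2 < |u x| := by
    have : Set.Ioi (c/2) ∈ nhds (|u x₀|) := Ioi_mem_nhds (by rw [← hc]; linarith)
    exact hcont.eventually_mem this
  obtain ⟨δ, hδ0, hδ⟩ := Metric.eventually_nhds_iff.1 hev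
  have hball : μ (Metric.ball x₀ δ) = ⊤ := by
    refine mu_ball_top n i0 hi0 x₀ hx₀0 ?_ hδ0
    exact mem_ball_zero_iff.1 hx₀b
  have hge : ENNReal.ofReal ((c/2)^2) * μ (Metric.ball x₀ δ)
      ≤ ∫⁻ x, ENNReal.ofReal ((u x) ^ 2) ∂μ := by
    calc ENNReal.ofReal ((c/2)^2) * μ (Metric.ball x₀ δ)
        = ∫⁻ _x in Metric.ball x₀ δ, ENNReal.ofReal ((c/2)^2) ∂μ := by
          rw [setLIntegral_const]
      _ ≤ ∫⁻ x in Metric.ball x₀ δ, ENNReal.ofReal ((u x) ^ 2) ∂μ := by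
          refine setLIntegral_mono' Metric.isOpen_ball.measurableSet fun x hx => ?_
          refine ENNReal.ofReal_le_ofReal ?_
          have h1 : c / 2 < |u x| := hδ (by rwa [Metric.mem_ball] at hx)
          nlinarith [abs_nonneg (u x), sq_abs (u x)]
      _ ≤ _ := setLIntegral_le_lintegral _ _
  rw [hball, ENNReal.mul_top (by positivity)] at hge
  exact absurd (top_unique hge ▸ hfin) (by simp)

lemma line_lemma {g g' : ℝ → ℝ} (hg : ∀ t, HasDerivAt g (g' t) t) (hg' : Continuous g')
    (h0 : 1 ≤ g 0) : 1/3 ≤ ∫ t in (0:ℝ)..(1/2), ((g' t)^2 + (g t)^2) := by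
  have hgc : Continuous g := continuous_iff_continuousAt.2 fun t => (hg t).continuousAt
  set E := ∫ t in (0:ℝ)..(1/2), ((g' t)^2 + (g t)^2) with hE
  have hFc : Continuous (fun t => (g' t)^2 + (g t)^2) := by fun_prop
  have hI : ∀ a b : ℝ, IntervalIntegrable (fun t => (g' t)^2 + (g t)^2) volume a b :=
    fun a b => hFc.intervalIntegrable a b
  have key : ∀ t ∈ Set.Icc (0:ℝ) (1/2), 1 ≤ (g t)^2 + E := by
    intro t ht
    have ftc : ∫ s in (0:ℝ)..t, (2 * g s * g' s) = g t ^ 2 - g 0 ^ 2 := by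
      refine intervalIntegral.integral_eq_sub_of_hasDerivAt (f := fun s => g s ^ 2)
        (fun s _ => by have h := (hg s).pow 2; simp only [Nat.cast_ofNat, Nat.reduceSub, pow_one] at h; exact h)
        (((continuous_const.mul hgc).mul hg').intervalIntegrable _ _)
    have hb1 : g 0 ^2 - g t ^2 ≤ ∫ s in (0:ℝ)..t, ((g' s)^2 + (g s)^2) := by
      have heq : g 0^2 - g t^2 = ∫ s in (0:ℝ)..t, (-(2 * g s * g' s)) := by
        rw [intervalIntegral.integral_neg, ftc]; ring
      rw [heq]
      refine intervalIntegral.integral_mono_on ht.1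
        (((continuous_const.mul hgc).mul hg').neg.intervalIntegrable _ _) (hI _ _) fun s _ => ?_
      nlinarith [sq_nonneg (g s + g' s), sq_nonneg (g s - g' s)]
    have hb2 : ∫ s in (0:ℝ)..t, ((g' s)^2 + (g s)^2) ≤ E := by
      rw [hE]
      refine intervalIntegral.integral_mono_interval le_rfl ht.1 ht.2 ?_ (hI _ _)
      filter_upwards with s using by positivity
    nlinarith [sq_nonneg (g 0)]
  have hgsq : ∫ t in (0:ℝ)..(1/2), (g t)^2 ≤ E := by
    rw [hE]
    refine intervalIntegral.integral_mono_on (by norm_num)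
      ((hgc.pow 2).intervalIntegrable _ _) (hI _ _) fun s _ => by nlinarith [sq_nonneg (g' s)]
  have hmain : (1:ℝ)/2 ≤ ∫ t in (0:ℝ)..(1/2), ((g t)^2 + E) := by
    have : ∫ t in (0:ℝ)..(1/2), (1:ℝ) ≤ ∫ t in (0:ℝ)..(1/2), ((g t)^2 + E) := by
      refine intervalIntegral.integral_mono_on (by norm_num)
        (intervalIntegrable_const) (((hgc.pow 2).add continuous_const).intervalIntegrable _ _)
        fun s hs => key s hs
    simpa using this
  have hsplit : ∫ t in (0:ℝ)..(1/2), ((g t)^2 + E)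
      = (∫ t in (0:ℝ)..(1/2), (g t)^2) + (1/2) * E := by
    rw [intervalIntegral.integral_add (f := fun t => g t ^ 2) ((hgc.pow 2).intervalIntegrable _ _) intervalIntegrable_const]
    simp [mul_comm]
  rw [hsplit] at hmain
  linarith

lemma grad_apply_le {m : ℕ} {u : EuclideanSpace ℝ (Fin m) → ℝ} {x v : EuclideanSpace ℝ (Fin m)}
    (hd : DifferentiableAt ℝ u x) : |fderiv ℝ u x v| ≤ ‖gradient u x‖ * ‖v‖ := by
  have h1 : fderiv ℝ u x v = inner ℝ (gradient u x) v := by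
    rw [gradient]
    exact (InnerProductSpace.toDual_symm_apply).symm
  rw [h1]
  exact abs_real_inner_le_norm _ _

lemma cap_slice_pos (n : ℕ) (i0 : Fin (n+1)) (hi0 : i0 = 0) :
    0 < sobolevCapacity (n+1)
      {x | x ∈ Metric.ball (0 : EuclideanSpace ℝ (Fin (n+1))) 1 ∧ x i0 = 0} := by
  subst hi0
  set s : ℝ := 1/(2*(n+1)) with hs_def
  have hs0 : 0 < s := by positivity
  have hkey : ((n:ℝ)+1) * s = 1/2 := by rw [hs_def]; field_simp
  have hs12 : s ≤ 1/2 := by nlinarith [Nat.cast_nonneg (α := ℝ) n]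
  set cLB : ℝ≥0∞ := ENNReal.ofReal (1/3) * ENNReal.ofReal (2*s)^n with hcLB
  have hc0 : 0 < cLB := by
    rw [hcLB]
    refine ENNReal.mul_pos (by simp) (pow_ne_zero n ?_)
    exact (ENNReal.ofReal_pos.2 (by positivity)).ne'
  refine lt_of_lt_of_le hc0 ?_
  rw [sobolevCapacity]
  refine le_iInf fun u => le_iInf fun hu => ?_
  obtain ⟨hC, V, hVo, hSV, hV1⟩ := hu
  have hudiff : Differentiable ℝ u := hC.differentiable one_ne_zero
  have hgradc : Continuous (gradient u) := by
    have h := hC.continuous_fderiv one_ne_zero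
    exact ((InnerProductSpace.toDual ℝ _).symm.continuous).comp h
  have hF : Measurable fun x : EuclideanSpace ℝ (Fin (n+1)) =>
      ENNReal.ofReal (‖gradient u x‖^2 + u x^2) :=
    (((hgradc.norm.pow 2).add (hC.continuous.pow 2)).measurable).ennreal_ofReal
  set A : Set ℝ := Set.Ioc (0:ℝ) (1/2) with hA
  set B : Set (Fin n → ℝ) := Set.univ.pi fun _ => Set.Ioc (-s) s with hB
  have hBm : MeasurableSet B := MeasurableSet.univ_pi fun _ => measurableSet_Ioc
  have inner_bound : ∀ y ∈ B, ENNReal.ofReal (1/3)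
      ≤ ∫⁻ t in A, ENNReal.ofReal
          (‖gradient u ((Phi n).symm (t, y))‖^2 + (u ((Phi n).symm (t, y)))^2) ∂volume := by
    intro y hy
    set L : ℝ → EuclideanSpace ℝ (Fin (n+1)) := fun t => (Phi n).symm (t, y) with hL_def
    set p0 := L 0 with hp0_def
    have hL0 : ∀ t, (L t) 0 = t := fun t => by
      simp only [hL_def, Phi_symm_apply, Fin.cons_zero]
    have hLs : ∀ t (j : Fin n), (L t) j.succ = y j := fun t j => by
      simp only [hL_def, Phi_symm_apply, Fin.cons_succ]
    set E1 : EuclideanSpace ℝ (Fin (n+1)) := EuclideanSpace.single 0 1 with hE1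
    have hLlin : ∀ t, L t = p0 + t • E1 := by
      intro t
      ext i
      have hco : (p0 + t • E1) i = p0 i + t * E1 i := rfl
      rw [hco]
      induction i using Fin.cases with
      | zero =>
          simp [hL0, hp0_def, hE1, EuclideanSpace.single_apply]
      | succ j =>
          simp [hLs, hp0_def, hE1, EuclideanSpace.single_apply, Fin.succ_ne_zero]
    have hp0S : p0 ∈ {x | x ∈ Metric.ball (0 : EuclideanSpace ℝ (Fin (n+1))) 1 ∧ x 0 = 0} := by
      refine ⟨?_, hL0 0⟩
      rw [mem_ball_zero_iff, EuclideanSpace.norm_eq]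
      rw [Real.sqrt_lt' one_pos]
      have hsum : ∑ i, ‖p0 i‖^2 = ‖p0 0‖^2 + ∑ j : Fin n, ‖p0 j.succ‖^2 :=
        Fin.sum_univ_succ _
      have h0 : p0 0 = 0 := hL0 0
      have hyj : ∀ j : Fin n, ‖p0 j.succ‖^2 ≤ s^2 := by
        intro j
        rw [hp0_def, hLs]
        have hmem := hy j (Set.mem_univ j)
        rw [Real.norm_eq_abs]
        exact pow_le_pow_left₀ (abs_nonneg _) (abs_le.2 ⟨le_of_lt hmem.1, hmem.2⟩) 2
      have hsumle : ∑ j : Fin n, ‖p0 j.succ‖^2 ≤ n * s^2 := by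
        calc ∑ j : Fin n, ‖p0 j.succ‖^2 ≤ ∑ _j : Fin n, s^2 :=
              Finset.sum_le_sum fun j _ => hyj j
          _ = n * s^2 := by simp [Finset.sum_const]
      have hns : (n:ℝ) * s^2 < 1 := by nlinarith [Nat.cast_nonneg (α := ℝ) n]
      rw [hsum, h0]
      simp only [norm_zero]
      nlinarith
    have hLc : Continuous L := by
      have : L = fun t => p0 + t • E1 := funext hLlin
      rw [this]
      fun_prop
    set g' : ℝ → ℝ := fun t => fderiv ℝ u (L t) E1 with hg'_def
    have hgd : ∀ t, HasDerivAt (fun t => u (L t)) (g' t) t := by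
      intro t
      have hLd : HasDerivAt L E1 t := by
        have heq : L = fun t => p0 + t • E1 := funext hLlin
        rw [heq]
        simpa using ((hasDerivAt_id t).smul_const E1).const_add p0
      exact (hudiff (L t)).hasFDerivAt.comp_hasDerivAt t hLd
    have hg'c : Continuous g' := by
      have h := hC.continuous_fderiv one_ne_zero
      exact (h.comp hLc).clm_apply continuous_const
    have h01 : 1 ≤ u (L 0) := hV1 p0 (hSV hp0S)
    have hline := line_lemma hgd hg'c h01
    have hE1n : ‖E1‖ = 1 := by rw [hE1]; simp [EuclideanSpace.norm_single]
    have hptwise : ∀ t, (g' t)^2 + (u (L t))^2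
        ≤ ‖gradient u (L t)‖^2 + (u (L t))^2 := by
      intro t
      have h1 : |g' t| ≤ ‖gradient u (L t)‖ := by
        have := grad_apply_le (x := L t) (v := E1) (hudiff (L t))
        rwa [hE1n, mul_one] at this
      have h2 : (g' t)^2 ≤ ‖gradient u (L t)‖^2 := by
        rw [← sq_abs (g' t)]
        exact pow_le_pow_left₀ (abs_nonneg _) h1 2
      linarith
    calc ENNReal.ofReal (1/3)
        ≤ ENNReal.ofReal (∫ t in (0:ℝ)..(1/2), ((g' t)^2 + (u (L t))^2)) :=
          ENNReal.ofReal_le_ofReal hline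
      _ = ENNReal.ofReal (∫ t in A, ((g' t)^2 + (u (L t))^2) ∂volume) := by
          rw [intervalIntegral.integral_of_le (by norm_num), hA]
      _ ≤ ∫⁻ t in A, ENNReal.ofReal ((g' t)^2 + (u (L t))^2) ∂volume := by
          rw [ofReal_integral_eq_lintegral_ofReal]
          · have hcont : Continuous fun t => (g' t)^2 + (u (L t))^2 := by
              have : Continuous fun t => u (L t) := hC.continuous.comp hLc
              fun_prop
            exact hcont.integrableOn_Ioc
          · filter_upwards with t using by positivity
      _ ≤ ∫⁻ t in A, ENNReal.ofReal
            (‖gradient u ((Phi n).symm (t, y))‖^2 + (u ((Phi n).symm (t, y)))^2) ∂volume := by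
          refine setLIntegral_mono' measurableSet_Ioc fun t _ => ?_
          exact ENNReal.ofReal_le_ofReal (hptwise t)
  -- assemble over the box B
  have hmap : Measurable fun p : ℝ × (Fin n → ℝ) =>
      ENNReal.ofReal (‖gradient u ((Phi n).symm p)‖^2 + (u ((Phi n).symm p))^2) :=
    hF.comp (Phi n).symm.measurable
  have hBvol : (volume : Measure (Fin n → ℝ)) B = ENNReal.ofReal (2*s)^n := by
    rw [hB, volume_pi_pi]
    simp [Real.volume_Ioc]
    congr 1
    ring_nf; rw [ENNReal.ofReal_mul' (by norm_num)]; simp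
  calc cLB = ENNReal.ofReal (1/3) * (volume : Measure (Fin n → ℝ)) B := by rw [hBvol]
    _ = ∫⁻ _y in B, ENNReal.ofReal (1/3) ∂volume := by rw [setLIntegral_const]
    _ ≤ ∫⁻ y in B, (∫⁻ t in A, ENNReal.ofReal
          (‖gradient u ((Phi n).symm (t, y))‖^2 + (u ((Phi n).symm (t, y)))^2) ∂volume)
          ∂volume := setLIntegral_mono' hBm inner_bound
    _ = ∫⁻ p in A ×ˢ B, ENNReal.ofReal
          (‖gradient u ((Phi n).symm p)‖^2 + (u ((Phi n).symm p))^2)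
          ∂((volume : Measure ℝ).prod (volume : Measure (Fin n → ℝ))) := by
        rw [← Measure.prod_restrict, lintegral_prod_symm _ hmap.aemeasurable]
    _ ≤ ∫⁻ p, ENNReal.ofReal
          (‖gradient u ((Phi n).symm p)‖^2 + (u ((Phi n).symm p))^2)
          ∂((volume : Measure ℝ).prod (volume : Measure (Fin n → ℝ))) :=
        setLIntegral_le_lintegral _ _
    _ = ∫⁻ x, ENNReal.ofReal (‖gradient u x‖^2 + (u x)^2) ∂volume :=
        ((Phi_mp n).symm (Phi n)).lintegral_comp hF
    _ = ∫⁻ x, ENNReal.ofReal (‖gradient u x‖^2 + (u x)^2) := rfl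

/-- The measure `μ(E) = ∫_{E ∩ B} 1/|x₁| dx` on `ℝ^d`, `d ≥ 2`, vanishes on capacity-zero
sets but is not Radon (it is infinite on some compact set); moreover every `u ∈ H¹` with
`∫ u² dμ < ∞` vanishes quasi-everywhere on the slice `{x ∈ B : x₁ = 0}`, which has
positive capacity. -/
theorem non_radon_capacitary_counterexample (d : ℕ) (hd : 2 ≤ d) :
    (∀ S, sobolevCapacity d S = 0 →
      ((volume.restrict (Metric.ball (0 : EuclideanSpace ℝ (Fin d)) 1)).withDensity
        (fun x => ENNReal.ofReal |x ⟨0, by omega⟩|⁻¹)) S = 0) ∧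
    (∃ K : Set (EuclideanSpace ℝ (Fin d)), IsCompact K ∧
      ((volume.restrict (Metric.ball (0 : EuclideanSpace ℝ (Fin d)) 1)).withDensity
        (fun x => ENNReal.ofReal |x ⟨0, by omega⟩|⁻¹)) K = ⊤) ∧
    (∀ u : EuclideanSpace ℝ (Fin d) → ℝ, Differentiable ℝ u →
      MemLp u 2 volume → MemLp (fun x => ‖gradient u x‖) 2 volume →
      (∫⁻ x, ENNReal.ofReal ((u x) ^ 2)
          ∂((volume.restrict (Metric.ball (0 : EuclideanSpace ℝ (Fin d)) 1)).withDensity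
            (fun x => ENNReal.ofReal |x ⟨0, by omega⟩|⁻¹))) < ⊤ →
      sobolevCapacity d
        {x | x ∈ Metric.ball (0 : EuclideanSpace ℝ (Fin d)) 1 ∧
          x ⟨0, by omega⟩ = 0 ∧ u x ≠ 0} = 0) ∧
    0 < sobolevCapacity d
        {x | x ∈ Metric.ball (0 : EuclideanSpace ℝ (Fin d)) 1 ∧ x ⟨0, by omega⟩ = 0} := by
  obtain ⟨n, rfl⟩ : ∃ n, d = n + 1 := ⟨d - 1, by omega⟩
  have h0 : (⟨0, by omega⟩ : Fin (n+1)) = 0 := rfl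
  refine ⟨?_, ?_, ?_, ?_⟩
  · intro S hS
    exact mu_zero_of_vol_zero (n+1) _ S
      (le_antisymm (hS ▸ vol_le_cap (n+1) S) (zero_le))
  · refine ⟨Metric.closedBall 0 (1/2), isCompact_closedBall _ _, ?_⟩
    refine top_unique ?_
    have hb := mu_ball_top n ⟨0, by omega⟩ h0 (0 : EuclideanSpace ℝ (Fin (n+1))) rfl
      (by simp) (r := 1/2) (by norm_num)
    exact hb ▸ measure_mono Metric.ball_subset_closedBall
  · intro u hdiff _ _ hfin
    have hempty := slice_empty n ⟨0, by omega⟩ h0 u hdiff hfin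
    rw [hempty]
    exact cap_empty _
  · exact cap_slice_pos n ⟨0, by omega⟩ h0
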